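/- If moreover γ < δK_x and α < βK_y, then H attains a strict global minimum on (0,K_x)×(0,K_y) at the point S := (γ/δ, α/β): for every (x,y) ∈ (0,K_x)×(0,K_y) with (x,y) ≠ S one has H(x,y) > H(S). -/

import Mathlib

open Set

noncomputable section

/-- The first integral
`H(x,y) = (1/r_y)(−α log y + (α − βKy) log(Ky − y)) + (1/r_x)(−γ log x + (γ − δKx) log(Kx − x))`. -/
def HPP (rx ry Kx Ky α β γ δ : ℝ) (x y : ℝ) : ℝ :=
  (1 / ry) * (-α * Real.log y + (α - β * Ky) * Real.log (Ky - y))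
  + (1 / rx) * (-γ * Real.log x + (γ - δ * Kx) * Real.log (Kx - x))

lemma ppKey_le (d K s x : ℝ) (hd : 0 < d) (hs : 0 < s) (hsK : s < K)
    (hx : 0 < x) (hxK : x < K) :
    d * s * Real.log x + d * (K - s) * Real.log (K - x)
      ≤ d * s * Real.log s + d * (K - s) * Real.log (K - s) := by
  have hKs : 0 < K - s := by linarith
  have hKx : 0 < K - x := by linarith
  have h1 : Real.log x - Real.log s ≤ x / s - 1 := by
    rw [← Real.log_div hx.ne' hs.ne']
    exact Real.log_le_sub_one_of_pos (div_pos hx hs)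
  have h2 : Real.log (K - x) - Real.log (K - s) ≤ (K - x) / (K - s) - 1 := by
    rw [← Real.log_div hKx.ne' hKs.ne']
    exact Real.log_le_sub_one_of_pos (div_pos hKx hKs)
  have e1 : d * s * (x / s - 1) = d * x - d * s := by field_simp
  have e2 : d * (K - s) * ((K - x) / (K - s) - 1) = d * s - d * x := by field_simp; ring
  have m1 := mul_le_mul_of_nonneg_left h1 (by positivity : (0:ℝ) ≤ d * s)
  have m2 := mul_le_mul_of_nonneg_left h2 (by positivity : (0:ℝ) ≤ d * (K - s))
  nlinarith [m1, m2, e1, e2]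

lemma ppKey_lt (d K s x : ℝ) (hd : 0 < d) (hs : 0 < s) (hsK : s < K)
    (hx : 0 < x) (hxK : x < K) (hne : x ≠ s) :
    d * s * Real.log x + d * (K - s) * Real.log (K - x)
      < d * s * Real.log s + d * (K - s) * Real.log (K - s) := by
  have hKs : 0 < K - s := by linarith
  have hKx : 0 < K - x := by linarith
  have h1 : Real.log x - Real.log s < x / s - 1 := by
    rw [← Real.log_div hx.ne' hs.ne']
    refine Real.log_lt_sub_one_of_pos (div_pos hx hs) ?_
    intro h
    exact hne (by field_simp at h; linarith)
  have h2 : Real.log (K - x) - Real.log (K - s) ≤ (K - x) / (K - s) - 1 := by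
    rw [← Real.log_div hKx.ne' hKs.ne']
    exact Real.log_le_sub_one_of_pos (div_pos hKx hKs)
  have e1 : d * s * (x / s - 1) = d * x - d * s := by field_simp
  have e2 : d * (K - s) * ((K - x) / (K - s) - 1) = d * s - d * x := by field_simp; ring
  have m1 := mul_lt_mul_of_pos_left h1 (by positivity : (0:ℝ) < d * s)
  have m2 := mul_le_mul_of_nonneg_left h2 (by positivity : (0:ℝ) ≤ d * (K - s))
  nlinarith [m1, m2, e1, e2]

/-- If `γ < δKx` and `α < βKy`, then `H` attains a strict global minimum on `(0,Kx) × (0,Ky)`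
at `S = (γ/δ, α/β)`. -/
theorem statement17 (rx ry Kx Ky α β γ δ : ℝ)
    (hrx : 0 < rx) (hry : 0 < ry) (hKx : 0 < Kx) (hKy : 0 < Ky)
    (hα : 0 < α) (hβ : 0 < β) (hγ : 0 < γ) (hδ : 0 < δ)
    (hγKx : γ < δ * Kx) (hαKy : α < β * Ky) :
    ∀ x y : ℝ, x ∈ Ioo (0:ℝ) Kx → y ∈ Ioo (0:ℝ) Ky → (x, y) ≠ ((γ / δ, α / β) : ℝ × ℝ) →
      HPP rx ry Kx Ky α β γ δ (γ / δ) (α / β) < HPP rx ry Kx Ky α β γ δ x y := by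
  intro x y hx hy hne
  obtain ⟨hx0, hxK⟩ := hx
  obtain ⟨hy0, hyK⟩ := hy
  have hsx0 : 0 < γ / δ := div_pos hγ hδ
  have hsxK : γ / δ < Kx := (div_lt_iff₀ hδ).2 (by linarith [mul_comm δ Kx])
  have hsy0 : 0 < α / β := div_pos hα hβ
  have hsyK : α / β < Ky := (div_lt_iff₀ hβ).2 (by linarith [mul_comm β Ky])
  have hdsx : δ * (γ / δ) = γ := by field_simp
  have hdsy : β * (α / β) = α := by field_simp
  -- inequalities for each coordinate
  have hAle : δ * (γ / δ) * Real.log x + δ * (Kx - γ / δ) * Real.log (Kx - x)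
      ≤ δ * (γ / δ) * Real.log (γ / δ) + δ * (Kx - γ / δ) * Real.log (Kx - γ / δ) :=
    ppKey_le δ Kx (γ / δ) x hδ hsx0 hsxK hx0 hxK
  have hBle : β * (α / β) * Real.log y + β * (Ky - α / β) * Real.log (Ky - y)
      ≤ β * (α / β) * Real.log (α / β) + β * (Ky - α / β) * Real.log (Ky - α / β) :=
    ppKey_le β Ky (α / β) y hβ hsy0 hsyK hy0 hyK
  have hcoef_x : δ * (Kx - γ / δ) = δ * Kx - γ := by rw [mul_sub, hdsx]
  have hcoef_y : β * (Ky - α / β) = β * Ky - α := by rw [mul_sub, hdsy]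
  rw [hdsx, hcoef_x] at hAle
  rw [hdsy, hcoef_y] at hBle
  have hrx' : 0 < 1 / rx := by positivity
  have hry' : 0 < 1 / ry := by positivity
  simp only [HPP]
  rcases eq_or_ne x (γ / δ) with hxe | hxe
  · have hye : y ≠ α / β := by
      intro hye; exact hne (by rw [hxe, hye])
    have hBlt : β * (α / β) * Real.log y + β * (Ky - α / β) * Real.log (Ky - y)
        < β * (α / β) * Real.log (α / β) + β * (Ky - α / β) * Real.log (Ky - α / β) :=
      ppKey_lt β Ky (α / β) y hβ hsy0 hsyK hy0 hyK hye
    rw [hdsy, hcoef_y] at hBlt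
    subst hxe
    have := mul_lt_mul_of_pos_left hBlt hry'
    nlinarith [this]
  · have hAlt : δ * (γ / δ) * Real.log x + δ * (Kx - γ / δ) * Real.log (Kx - x)
        < δ * (γ / δ) * Real.log (γ / δ) + δ * (Kx - γ / δ) * Real.log (Kx - γ / δ) :=
      ppKey_lt δ Kx (γ / δ) x hδ hsx0 hsxK hx0 hxK hxe
    rw [hdsx, hcoef_x] at hAlt
    have h1 := mul_lt_mul_of_pos_left hAlt hrx'
    have h2 := mul_le_mul_of_nonneg_left hBle hry'.le
    nlinarith [h1, h2]
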